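/- Let a > 0, κ₁ = π/(2a), and χ(u) = cos(κ₁ u). For each integer k ≥ 0 define μ_k = ∫_{−a}^{a} u^k (χ'(u)² − κ₁² χ(u)²) du. Then μ_k = 0 if k is odd or k = 0, and for every even integer k ≥ 2, μ_k = (1/2) · k!/(2κ₁)^{k−1} · Σ_{l=1}^{k/2} (−1)^{k/2 − l} π^{2l−1}/(2l−1)!. Moreover μ_k > 0 for every even k ≥ 2. -/

import Mathlib

open MeasureTheory Real

namespace Stmt7Aux

noncomputable def II (a : ℝ) (k : ℕ) : ℝ := ∫ u in (-a)..a, u ^ k * Real.cos ((π/a) * u)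
noncomputable def JJ (a : ℝ) (k : ℕ) : ℝ := ∫ u in (-a)..a, u ^ k * Real.sin ((π/a) * u)
noncomputable def Sm (m : ℕ) : ℝ :=
  ∑ l ∈ Finset.Icc 1 m, (-1:ℝ)^(m-l) * π^(2*l-1) / (Nat.factorial (2*l-1))

lemma hd_lin (a : ℝ) (u : ℝ) : HasDerivAt (fun x : ℝ => (π/a) * x) (π/a) u := by
  simpa using (hasDerivAt_id u).const_mul (π/a)

lemma II_odd (a : ℝ) (k : ℕ) (hk : Odd k) : II a k = 0 := by
  have h := intervalIntegral.integral_comp_neg (fun u : ℝ => u ^ k * Real.cos ((π/a) * u))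
    (a := -a) (b := a)
  simp only [neg_neg] at h
  have h2 : (∫ u in (-a)..a, (-u) ^ k * Real.cos ((π/a) * -u))
      = ∫ u in (-a)..a, -(u ^ k * Real.cos ((π/a) * u)) := by
    congr 1; ext u
    rw [hk.neg_pow, mul_neg, Real.cos_neg]; ring
  rw [h2, intervalIntegral.integral_neg] at h
  have : II a k = ∫ u in (-a)..a, u ^ k * Real.cos ((π/a) * u) := rfl
  rw [this]; linarith

lemma II_zero (a : ℝ) (ha : 0 < a) : II a 0 = 0 := by
  have hder : ∀ u ∈ Set.uIcc (-a) a,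
      HasDerivAt (fun x : ℝ => Real.sin ((π/a) * x) * (a/π)) (Real.cos ((π/a) * u)) u := by
    intro u _
    have h2 := ((Real.hasDerivAt_sin ((π/a) * u)).comp u (hd_lin a u)).mul_const (a/π)
    refine h2.congr_deriv ?_
    have : π ≠ 0 := Real.pi_ne_zero
    field_simp
  have hint : IntervalIntegrable (fun u : ℝ => Real.cos ((π/a) * u)) volume (-a) a := by
    apply Continuous.intervalIntegrable; fun_prop
  have h := intervalIntegral.integral_eq_sub_of_hasDerivAt hder hint
  have e : II a 0 = ∫ u in (-a)..a, Real.cos ((π/a) * u) := by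
    unfold II; simp
  rw [e, h]
  have hπa : (π/a) * a = π := by field_simp
  have hπa' : (π/a) * (-a) = -π := by field_simp
  rw [hπa, hπa', Real.sin_pi, Real.sin_neg, Real.sin_pi]
  ring

lemma ibp_cos (a : ℝ) (ha : 0 < a) (n : ℕ) :
    II a (n+1) = -(((n:ℝ)+1) * (a/π)) * JJ a n := by
  have hu : ∀ x ∈ Set.uIcc (-a) a,
      HasDerivAt (fun x : ℝ => x ^ (n+1)) (((n:ℝ)+1) * x ^ n) x := by
    intro x _
    simpa using hasDerivAt_pow (n+1) x
  have hv : ∀ x ∈ Set.uIcc (-a) a,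
      HasDerivAt (fun x : ℝ => Real.sin ((π/a) * x) * (a/π)) (Real.cos ((π/a) * x)) x := by
    intro x _
    have h2 := ((Real.hasDerivAt_sin ((π/a) * x)).comp x (hd_lin a x)).mul_const (a/π)
    refine h2.congr_deriv ?_
    have : π ≠ 0 := Real.pi_ne_zero
    field_simp
  have hu' : IntervalIntegrable (fun x : ℝ => ((n:ℝ)+1) * x ^ n) volume (-a) a := by
    apply Continuous.intervalIntegrable; fun_prop
  have hv' : IntervalIntegrable (fun x : ℝ => Real.cos ((π/a) * x)) volume (-a) a := by
    apply Continuous.intervalIntegrable; fun_prop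
  have h := intervalIntegral.integral_mul_deriv_eq_deriv_mul hu hv hu' hv'
  have hπa : (π/a) * a = π := by field_simp
  have hπa' : (π/a) * (-a) = -π := by field_simp
  rw [hπa, hπa', Real.sin_pi, Real.sin_neg, Real.sin_pi] at h
  simp only [neg_zero, zero_mul, mul_zero, sub_zero, zero_sub] at h
  have e2 : (∫ x in (-a)..a, ((n:ℝ)+1) * x ^ n * (Real.sin ((π/a) * x) * (a/π)))
      = (((n:ℝ)+1) * (a/π)) * JJ a n := by
    rw [show (fun x : ℝ => ((n:ℝ)+1) * x ^ n * (Real.sin ((π/a) * x) * (a/π)))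
        = fun x : ℝ => (((n:ℝ)+1) * (a/π)) * (x ^ n * Real.sin ((π/a) * x)) by ext x; ring]
    rw [intervalIntegral.integral_const_mul]
    rfl
  calc II a (n+1) = ∫ x in (-a)..a, x ^ (n+1) * Real.cos ((π/a) * x) := rfl
    _ = -(((n:ℝ)+1) * (a/π)) * JJ a n := by rw [h, e2]; ring

lemma ibp_sin (a : ℝ) (ha : 0 < a) (n : ℕ) :
    JJ a (n+1) = (a^(n+1) - (-a)^(n+1)) * (a/π) + (((n:ℝ)+1) * (a/π)) * II a n := by
  have hu : ∀ x ∈ Set.uIcc (-a) a,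
      HasDerivAt (fun x : ℝ => x ^ (n+1)) (((n:ℝ)+1) * x ^ n) x := by
    intro x _
    simpa using hasDerivAt_pow (n+1) x
  have hv : ∀ x ∈ Set.uIcc (-a) a,
      HasDerivAt (fun x : ℝ => -Real.cos ((π/a) * x) * (a/π)) (Real.sin ((π/a) * x)) x := by
    intro x _
    have h2 := (((Real.hasDerivAt_cos ((π/a) * x)).comp x (hd_lin a x)).neg).mul_const (a/π)
    refine h2.congr_deriv ?_
    have : π ≠ 0 := Real.pi_ne_zero
    field_simp
  have hu' : IntervalIntegrable (fun x : ℝ => ((n:ℝ)+1) * x ^ n) volume (-a) a := by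
    apply Continuous.intervalIntegrable; fun_prop
  have hv' : IntervalIntegrable (fun x : ℝ => Real.sin ((π/a) * x)) volume (-a) a := by
    apply Continuous.intervalIntegrable; fun_prop
  have h := intervalIntegral.integral_mul_deriv_eq_deriv_mul hu hv hu' hv'
  have hπa : (π/a) * a = π := by field_simp
  have hπa' : (π/a) * (-a) = -π := by field_simp
  rw [hπa, hπa', Real.cos_pi, Real.cos_neg, Real.cos_pi] at h
  have e2 : (∫ x in (-a)..a, ((n:ℝ)+1) * x ^ n * (-Real.cos ((π/a) * x) * (a/π)))
      = -((((n:ℝ)+1) * (a/π)) * II a n) := by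
    rw [show (fun x : ℝ => ((n:ℝ)+1) * x ^ n * (-Real.cos ((π/a) * x) * (a/π)))
        = fun x : ℝ => (-(((n:ℝ)+1) * (a/π))) * (x ^ n * Real.cos ((π/a) * x)) by ext x; ring]
    rw [intervalIntegral.integral_const_mul]
    show -(((n:ℝ)+1) * (a/π)) * II a n = _
    ring
  calc JJ a (n+1) = ∫ x in (-a)..a, x ^ (n+1) * Real.sin ((π/a) * x) := rfl
    _ = _ := by rw [h, e2]; ring

lemma Sm_succ (m : ℕ) : Sm (m+1) = π^(2*m+1)/(Nat.factorial (2*m+1)) - Sm m := by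
  unfold Sm
  rw [Finset.sum_Icc_succ_top (by omega : 1 ≤ m+1)]
  have h1 : ∀ l ∈ Finset.Icc 1 m,
      (-1:ℝ)^(m+1-l) * π^(2*l-1) / (Nat.factorial (2*l-1))
      = -((-1:ℝ)^(m-l) * π^(2*l-1) / (Nat.factorial (2*l-1))) := by
    intro l hl
    have hlm : l ≤ m := (Finset.mem_Icc.mp hl).2
    have : m+1-l = (m-l)+1 := by omega
    rw [this, pow_succ]
    ring
  rw [Finset.sum_congr rfl h1, Finset.sum_neg_distrib]
  have : m+1-(m+1) = 0 := by omega
  rw [this]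
  have h2 : 2*(m+1)-1 = 2*m+1 := by omega
  rw [h2, pow_zero]
  ring

lemma II_rec (a : ℝ) (ha : 0 < a) (m : ℕ) :
    II a (2*m+2) = -((2*(m:ℝ)+2) * (a/π)) *
      (2 * a^(2*m+1) * (a/π) + ((2*(m:ℝ)+1) * (a/π)) * II a (2*m)) := by
  have h1 := ibp_cos a ha (2*m+1)
  have h2 := ibp_sin a ha (2*m)
  have hodd : (-a)^(2*m+1) = -a^(2*m+1) := Odd.neg_pow ⟨m, by ring⟩ a
  rw [hodd] at h2
  have e : 2*m+1+1 = 2*m+2 := by ring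
  rw [e] at h1
  rw [h1, h2]
  push_cast
  ring

lemma II_formula (a : ℝ) (ha : 0 < a) (m : ℕ) :
    II a (2*m+2) = -(2 * (a/π)^(2*m+3)) * (Nat.factorial (2*m+2)) * Sm (m+1) := by
  induction m with
  | zero =>
    have h := II_rec a ha 0
    simp only [Nat.mul_zero, Nat.zero_add] at h ⊢
    rw [h, II_zero a ha]
    have : Sm 1 = π := by
      rw [show (1:ℕ) = 0 + 1 by rfl, Sm_succ]
      simp [Sm]
    rw [this]
    have hπ : π ≠ 0 := Real.pi_ne_zero
    have ha' : a ≠ 0 := ne_of_gt ha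
    simp [Nat.factorial]
    field_simp
  | succ m ih =>
    have h := II_rec a ha (m+1)
    have e1 : 2*(m+1)+2 = 2*m+4 := by ring
    have e2 : 2*(m+1) = 2*m+2 := by ring
    rw [e1, e2] at h
    rw [e1, h, ih, Sm_succ (m+1)]
    have hπ : π ≠ 0 := Real.pi_ne_zero
    have ha' : a ≠ 0 := ne_of_gt ha
    have hf1 : (Nat.factorial (2*m+4) : ℝ)
        = (2*(m:ℝ)+4) * (2*(m:ℝ)+3) * (Nat.factorial (2*m+2)) := by
      have e : 2*m+4 = (2*m+3)+1 := by ring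
      rw [e, Nat.factorial_succ]
      have e' : 2*m+3 = (2*m+2)+1 := by ring
      rw [e', Nat.factorial_succ]
      push_cast
      ring
    have hf2 : (Nat.factorial (2*(m+1)+1) : ℝ) = (2*(m:ℝ)+3) * (Nat.factorial (2*m+2)) := by
      have e : 2*(m+1)+1 = (2*m+2)+1 := by ring
      rw [e, Nat.factorial_succ]
      push_cast
      ring
    rw [hf1, hf2]
    have hfne : (Nat.factorial (2*m+2) : ℝ) ≠ 0 := by
      exact_mod_cast Nat.factorial_ne_zero _
    have e3 : 2*m+2+1 = 2*m+3 := by ring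
    have e4 : 2*(m+1)+3 = 2*m+5 := by ring
    have e5 : 2*(m+1)+1 = 2*m+3 := by ring
    rw [e3, e4, e5]
    have hane : a^(2*m+3) = (a/π)^(2*m+3) * π^(2*m+3) := by
      rw [div_pow]
      field_simp
    rw [hane]
    have h3ne : (2*(m:ℝ)+3) ≠ 0 := by positivity
    push_cast
    simp only [div_pow]
    field_simp
    ring

lemma II_neg (a : ℝ) (ha : 0 < a) (k : ℕ) (hk : Even k) (hk2 : 2 ≤ k) : II a k < 0 := by
  set f : ℝ → ℝ := fun u => u ^ k * Real.cos ((π/a) * u) with hf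
  have hcont : Continuous f := by fun_prop
  have hint : ∀ c d : ℝ, IntervalIntegrable f volume c d :=
    fun c d => hcont.intervalIntegrable c d
  have hsym : (∫ u in (-a)..(0:ℝ), f u) = ∫ u in (0:ℝ)..a, f u := by
    have h := intervalIntegral.integral_comp_neg f (a := (0:ℝ)) (b := a)
    simp only [neg_zero] at h
    rw [← h]
    congr 1; ext u
    simp only [hf]
    rw [hk.neg_pow, mul_neg, Real.cos_neg]
  have hsplit : II a k = (∫ u in (-a)..(0:ℝ), f u) + ∫ u in (0:ℝ)..a, f u := by
    rw [intervalIntegral.integral_add_adjacent_intervals (hint _ _) (hint _ _)]; rfl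
  have hsplit2 : (∫ u in (0:ℝ)..a, f u)
      = (∫ u in (0:ℝ)..(a/2), f u) + ∫ u in (a/2)..a, f u := by
    rw [intervalIntegral.integral_add_adjacent_intervals (hint _ _) (hint _ _)]
  have hrefl : (∫ u in (a/2)..a, f u) = ∫ u in (0:ℝ)..(a/2), f (a - u) := by
    have h := intervalIntegral.integral_comp_sub_left f a (a := (0:ℝ)) (b := a/2)
    rw [h]
    norm_num
    congr 1
    ring
  have hfa : ∀ u, f (a - u) = -((a - u) ^ k * Real.cos ((π/a) * u)) := by
    intro u
    simp only [hf]
    have : (π/a) * (a - u) = π - (π/a) * u := by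
      field_simp
    rw [this, Real.cos_pi_sub]
    ring
  have hkey : (∫ u in (0:ℝ)..(a/2), f u) + (∫ u in (0:ℝ)..(a/2), f (a - u))
      = -∫ u in (0:ℝ)..(a/2), ((a - u) ^ k - u ^ k) * Real.cos ((π/a) * u) := by
    rw [← intervalIntegral.integral_add (hint _ _) ?hi, ← intervalIntegral.integral_neg]
    · congr 1; ext u
      rw [hfa u]; simp only [hf]; ring
    case hi =>
      apply Continuous.intervalIntegrable
      have : Continuous fun u : ℝ => (a - u) ^ k * Real.cos ((π/a) * u) := by fun_prop
      simp only [hfa]; exact this.neg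
  have hpos : 0 < ∫ u in (0:ℝ)..(a/2), ((a - u) ^ k - u ^ k) * Real.cos ((π/a) * u) := by
    apply intervalIntegral.intervalIntegral_pos_of_pos_on
    · apply Continuous.intervalIntegrable; fun_prop
    · intro x hx
      obtain ⟨hx0, hx1⟩ := hx
      have hxa : x < a - x := by linarith
      have hcos : 0 < Real.cos ((π/a) * x) := by
        apply Real.cos_pos_of_mem_Ioo
        constructor
        · have : 0 < (π/a) * x := by positivity
          linarith [Real.pi_pos]
        · have hπa : 0 < π/a := by positivity
          calc (π/a) * x < (π/a) * (a/2) := by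
                exact mul_lt_mul_of_pos_left hx1 hπa
            _ = π/2 := by field_simp
      have hpow : x ^ k < (a - x) ^ k := by
        apply pow_lt_pow_left₀ hxa (le_of_lt hx0)
        omega
      have : 0 < (a - x) ^ k - x ^ k := by linarith
      positivity
    · linarith
  rw [hsplit, hsplit2, hsym, ← add_assoc, hrefl]
  linarith [hpos, hkey]

end Stmt7Aux

open Stmt7Aux

/-- Moments of the deficiency density of the first transverse Dirichlet mode:
with `κ₁ = π/(2a)`, `χ(u) = cos(κ₁ u)`, and
`μ_k = ∫_{-a}^a u^k (χ'(u)² - κ₁² χ(u)²) du`, we have `μ_k = 0` for `k` odd or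
`k = 0`, the explicit formula for even `k ≥ 2`, and `μ_k > 0` for even `k ≥ 2`. -/
theorem stmt_7 (a : ℝ) (ha : 0 < a) (κ₁ : ℝ) (hκ : κ₁ = π / (2 * a))
    (χ : ℝ → ℝ) (hχ : χ = fun u => Real.cos (κ₁ * u))
    (μ : ℕ → ℝ)
    (hμ : ∀ k, μ k = ∫ u in (-a)..a, u ^ k * ((deriv χ u) ^ 2 - κ₁ ^ 2 * (χ u) ^ 2)) :
    (∀ k, Odd k → μ k = 0) ∧ μ 0 = 0 ∧
      (∀ k : ℕ, Even k → 2 ≤ k →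
        μ k = (1 / 2) * (Nat.factorial k : ℝ) / (2 * κ₁) ^ (k - 1) *
          ∑ l ∈ Finset.Icc 1 (k / 2),
            (-1 : ℝ) ^ (k / 2 - l) * π ^ (2 * l - 1) / (Nat.factorial (2 * l - 1))) ∧
      (∀ k : ℕ, Even k → 2 ≤ k → 0 < μ k) := by
  have ha' : a ≠ 0 := ne_of_gt ha
  have hπ : π ≠ 0 := Real.pi_ne_zero
  have hder : ∀ u : ℝ, deriv χ u = -Real.sin (κ₁ * u) * κ₁ := by
    intro u
    rw [hχ]
    have h1 : HasDerivAt (fun x : ℝ => κ₁ * x) κ₁ u := by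
      simpa using (hasDerivAt_id u).const_mul κ₁
    exact ((Real.hasDerivAt_cos (κ₁*u)).comp u h1).deriv
  have hμ' : ∀ k, μ k = -κ₁^2 * II a k := by
    intro k
    rw [hμ k]
    have hpt : ∀ u : ℝ, u ^ k * ((deriv χ u)^2 - κ₁^2 * (χ u)^2)
        = -κ₁^2 * (u ^ k * Real.cos ((π/a) * u)) := by
      intro u
      rw [hder u, hχ]
      simp only
      have h2 : (π/a) * u = 2 * (κ₁ * u) := by rw [hκ]; field_simp
      rw [h2, Real.cos_two_mul']
      ring
    have e : (∫ u in (-a)..a, u ^ k * ((deriv χ u)^2 - κ₁^2 * (χ u)^2))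
        = ∫ u in (-a)..a, -κ₁^2 * (u ^ k * Real.cos ((π/a) * u)) := by
      congr 1; ext u; exact hpt u
    rw [e, intervalIntegral.integral_const_mul]
    rfl
  have hκpos : 0 < κ₁ := by rw [hκ]; positivity
  refine ⟨?_, ?_, ?_, ?_⟩
  · intro k hk
    rw [hμ' k, II_odd a k hk]
    ring
  · rw [hμ' 0, II_zero a ha]
    ring
  · intro k hk hk2
    obtain ⟨j, hj⟩ := hk
    have hkm : k = 2*(j-1)+2 := by omega
    set m := j - 1 with hm
    subst hkm
    have hdiv : (2*m+2)/2 = m+1 := by omega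
    have hsub : 2*m+2-1 = 2*m+1 := by omega
    rw [hμ' _, II_formula a ha m, hdiv, hsub]
    have hSm : (∑ l ∈ Finset.Icc 1 (m+1),
        (-1:ℝ)^(m+1-l) * π^(2*l-1) / (Nat.factorial (2*l-1))) = Sm (m+1) := rfl
    rw [hSm]
    have h2κ : 2*κ₁ = π/a := by rw [hκ]; field_simp
    rw [h2κ, hκ]
    rw [div_pow, div_pow, div_pow]
    field_simp
    ring
  · intro k hk hk2
    have hII := II_neg a ha k hk hk2
    rw [hμ' k]
    have h1 : 0 < κ₁^2 := by positivity
    calc (0:ℝ) < κ₁^2 * (-II a k) := mul_pos h1 (neg_pos.2 hII)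
      _ = -κ₁^2 * II a k := by ring
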